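/- For H ∈ (1/2, 1), H(2H−1) ∫_0^1 ∫_0^1 (1−t)^{−1/2} (1−s)^{−1/2} |t−s|^{2H−2} dt ds = 2H · B(2H−1, 1/2), where B denotes the Euler Beta function. -/

import Mathlib

open intervalIntegral

open MeasureTheory Set Real


lemma aux1 {p q : ℝ} (hp : -1 < p) (hq : -1 < q) {t : ℝ} (ht : 0 < t) :
    IntervalIntegrable (fun s => s ^ p * (t - s) ^ q) volume 0 t := by
  have h1 : IntervalIntegrable (fun s : ℝ => s ^ p * (t - s) ^ q) volume 0 (t / 2) := by
    apply (intervalIntegrable_rpow' hp).mul_continuousOn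
    apply ContinuousOn.rpow_const (by fun_prop)
    intro x hx
    rw [uIcc_of_le (by linarith)] at hx
    exact Or.inl (by nlinarith [hx.2])
  have h2 : IntervalIntegrable (fun s : ℝ => s ^ p * (t - s) ^ q) volume (t / 2) t := by
    apply IntervalIntegrable.continuousOn_mul
    · have := (intervalIntegrable_rpow' (a := 0) (b := t / 2) hq).comp_sub_left t
      norm_num at this
      rw [show t - t / 2 = t / 2 by ring] at this
      exact this.symm
    · apply ContinuousOn.rpow_const continuousOn_id
      intro x hx
      rw [uIcc_of_le (by linarith)] at hx
      exact Or.inl (by simp; nlinarith [hx.1])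
  exact h1.trans h2

lemma aux2 {p q : ℝ} (hq : -1 < q) {s b : ℝ} (hs : 0 < s) (hb : s ≤ b) :
    IntervalIntegrable (fun t => t ^ p * (t - s) ^ q) volume s b := by
  apply IntervalIntegrable.continuousOn_mul
  · have := (intervalIntegrable_rpow' (a := 0) (b := b - s) hq).comp_sub_right s
    norm_num at this
    exact this
  · apply ContinuousOn.rpow_const continuousOn_id
    intro x hx
    rw [uIcc_of_le hb] at hx
    exact Or.inl (by simp; nlinarith [hx.1])

lemma aux_scale {p q : ℝ} {t : ℝ} (ht : 0 < t) :
    ∫ s in (0:ℝ)..t, s ^ p * (t - s) ^ q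
      = t ^ (p + q + 1) * ∫ u in (0:ℝ)..1, u ^ p * (1 - u) ^ q := by
  have h := integral_comp_mul_right (a := 0) (b := 1) (fun x => x ^ p * (t - x) ^ q) ht.ne'
  rw [zero_mul, one_mul] at h
  have h2 : ∫ u in (0:ℝ)..1, (fun x => x ^ p * (t - x) ^ q) (u * t)
      = (t ^ p * t ^ q) * ∫ u in (0:ℝ)..1, u ^ p * (1 - u) ^ q := by
    rw [← intervalIntegral.integral_const_mul]
    apply integral_congr
    intro u hu
    rw [uIcc_of_le (by norm_num)] at hu
    simp only
    rw [show t - u * t = (1 - u) * t by ring, mul_rpow hu.1 ht.le,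
      mul_rpow (by linarith [hu.2]) ht.le]
    ring
  rw [h2] at h
  have := congrArg (fun x => t • x) h
  simp only [smul_smul, mul_inv_cancel₀ ht.ne', one_smul] at this
  rw [← this, smul_eq_mul, rpow_add ht, rpow_add ht, rpow_one]
  ring

lemma beta_symm {p q : ℝ} :
    ∫ u in (0:ℝ)..1, u ^ q * (1 - u) ^ p = ∫ u in (0:ℝ)..1, u ^ p * (1 - u) ^ q := by
  have := integral_comp_sub_left (a := 0) (b := 1) (fun x => x ^ p * (1 - x) ^ q) 1
  norm_num at this
  rw [← this]
  apply integral_congr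
  intro u _
  simp only [sub_sub_cancel]
  ring

lemma key {p q : ℝ} (hp : -1 < p) (hq : -1 < q) (hq0 : q < 0) (h2 : -1 < 2 * p + q + 1) :
    IntervalIntegrable (fun s => ∫ t in s..1, s ^ p * t ^ p * (t - s) ^ q) volume 0 1 ∧
    (∫ s in (0:ℝ)..1, ∫ t in s..1, s ^ p * t ^ p * (t - s) ^ q)
      = ∫ t in (0:ℝ)..1, ∫ s in (0:ℝ)..t, s ^ p * t ^ p * (t - s) ^ q := by
  set μ : Measure ℝ := volume.restrict (Ioc 0 1) with hμ
  set G : ℝ → ℝ → ℝ := fun s t => if s < t then s ^ p * t ^ p * (t - s) ^ q else 0 with hGdef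
  set β : ℝ := ∫ u in (0:ℝ)..1, u ^ p * (1 - u) ^ q with hβ
  have hGm : Measurable (Function.uncurry G) := by
    exact Measurable.ite (measurableSet_lt measurable_fst measurable_snd) (by fun_prop)
      measurable_const
  -- sections in s, for fixed t
  have hpc1 : ∀ t ∈ Ioc (0:ℝ) 1, IntegrableOn (fun s => G s t) (Ioc 0 t) volume := by
    intro t ht
    have h0 : IntegrableOn (fun s => (s ^ p * (t - s) ^ q) * t ^ p) (Ioc 0 t) volume :=
      (intervalIntegrable_iff_integrableOn_Ioc_of_le ht.1.le).1 ((aux1 hp hq ht.1).mul_const _)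
    apply h0.congr_fun _ measurableSet_Ioc
    intro s hs
    by_cases h : s < t
    · simp only [hGdef, if_pos h]; ring
    · have hst : s = t := le_antisymm hs.2 (not_lt.1 h)
      subst hst
      simp [hGdef, Real.zero_rpow hq0.ne]
  have hpc2 : ∀ t : ℝ, IntegrableOn (fun s => G s t) (Ioc t 1) volume := by
    intro t
    apply (integrableOn_zero (ε' := ℝ)).congr_fun _ measurableSet_Ioc
    intro s hs
    simp [hGdef, not_lt.2 hs.1.le, asymm hs.1]
  -- sections in t, for fixed s
  have hqc1 : ∀ s : ℝ, IntegrableOn (fun t => G s t) (Ioc 0 s) volume := by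
    intro s
    apply (integrableOn_zero (ε' := ℝ)).congr_fun _ measurableSet_Ioc
    intro t ht
    simp [hGdef, not_lt.2 ht.2]
  have hqc2 : ∀ s ∈ Ioc (0:ℝ) 1, IntegrableOn (fun t => G s t) (Ioc s 1) volume := by
    intro s hs
    have h0 : IntegrableOn (fun t => s ^ p * (t ^ p * (t - s) ^ q)) (Ioc s 1) volume :=
      (intervalIntegrable_iff_integrableOn_Ioc_of_le hs.2).1 ((aux2 hq hs.1 hs.2).const_mul _)
    apply h0.congr_fun _ measurableSet_Ioc
    intro t ht
    simp only [hGdef, if_pos ht.1]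
    ring
  -- inner integral identities
  have inner1 : ∀ s ∈ Ioc (0:ℝ) 1,
      (∫ t in Ioc (0:ℝ) 1, G s t) = ∫ t in s..1, s ^ p * t ^ p * (t - s) ^ q := by
    intro s hs
    rw [← Ioc_union_Ioc_eq_Ioc hs.1.le hs.2,
      setIntegral_union (Ioc_disjoint_Ioc_of_le le_rfl) measurableSet_Ioc (hqc1 s) (hqc2 s hs)]
    have e1 : ∫ t in Ioc (0:ℝ) s, G s t = 0 := by
      rw [setIntegral_congr_fun measurableSet_Ioc
        (fun t ht => by simp [hGdef, not_lt.2 ht.2] : EqOn (fun t => G s t) (fun _ => (0:ℝ)) _)]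
      simp
    have e2 : ∫ t in Ioc s 1, G s t = ∫ t in s..1, s ^ p * t ^ p * (t - s) ^ q := by
      rw [intervalIntegral.integral_of_le hs.2]
      apply setIntegral_congr_fun measurableSet_Ioc
      intro t ht
      simp [hGdef, if_pos ht.1]
    rw [e1, e2, zero_add]
  have inner2 : ∀ t ∈ Ioc (0:ℝ) 1,
      (∫ s in Ioc (0:ℝ) 1, G s t) = ∫ s in (0:ℝ)..t, s ^ p * t ^ p * (t - s) ^ q := by
    intro t ht
    rw [← Ioc_union_Ioc_eq_Ioc ht.1.le ht.2,
      setIntegral_union (Ioc_disjoint_Ioc_of_le le_rfl) measurableSet_Ioc (hpc1 t ht) (hpc2 t)]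
    have e1 : ∫ s in Ioc (0:ℝ) t, G s t = ∫ s in (0:ℝ)..t, s ^ p * t ^ p * (t - s) ^ q := by
      rw [intervalIntegral.integral_of_le ht.1.le]
      apply setIntegral_congr_fun measurableSet_Ioc
      intro s hs
      by_cases h : s < t
      · simp [hGdef, if_pos h]
      · have hst : s = t := le_antisymm hs.2 (not_lt.1 h)
        subst hst
        simp [hGdef, Real.zero_rpow hq0.ne]
    have e2 : ∫ s in Ioc t 1, G s t = 0 := by
      rw [setIntegral_congr_fun measurableSet_Ioc
        (fun s hs => by simp [hGdef, asymm hs.1, not_lt.2 hs.1.le]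
          : EqOn (fun s => G s t) (fun _ => (0:ℝ)) _)]
      simp
    rw [e1, e2, add_zero]
  -- value of the inner integral over (0, t)
  have hval2 : ∀ t ∈ Ioc (0:ℝ) 1,
      (∫ s in (0:ℝ)..t, s ^ p * t ^ p * (t - s) ^ q) = β * t ^ (2 * p + q + 1) := by
    intro t ht
    have e : ∫ s in (0:ℝ)..t, s ^ p * t ^ p * (t - s) ^ q
        = t ^ p * ∫ s in (0:ℝ)..t, s ^ p * (t - s) ^ q := by
      rw [← intervalIntegral.integral_const_mul]
      apply intervalIntegral.integral_congr
      intro s _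
      ring
    rw [e, aux_scale ht.1, ← hβ, ← mul_assoc, ← Real.rpow_add ht.1]
    rw [show p + (p + q + 1) = 2 * p + q + 1 by ring]
    ring
  -- integrability of the norm integral
  have hnorm : ∀ t ∈ Ioc (0:ℝ) 1, (∫ s, ‖G s t‖ ∂μ) = β * t ^ (2 * p + q + 1) := by
    intro t ht
    have e : ∫ s, ‖G s t‖ ∂μ = ∫ s in Ioc (0:ℝ) 1, G s t := by
      rw [hμ]
      apply setIntegral_congr_fun measurableSet_Ioc
      intro s hs
      simp only [Real.norm_eq_abs]
      by_cases h : s < t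
      · simp only [hGdef, if_pos h]
        have h1 : (0:ℝ) ≤ s ^ p := Real.rpow_nonneg hs.1.le _
        have h2 : (0:ℝ) ≤ t ^ p := Real.rpow_nonneg ht.1.le _
        have h3 : (0:ℝ) ≤ (t - s) ^ q := Real.rpow_nonneg (by linarith) _
        rw [abs_of_nonneg (by positivity)]
      · simp [hGdef, h]
    rw [e, inner2 t ht, hval2 t ht]
  have hnormint : Integrable (fun t => ∫ s, ‖G s t‖ ∂μ) μ := by
    have hInt : Integrable (fun t : ℝ => β * t ^ (2 * p + q + 1)) μ :=
      (((intervalIntegrable_iff_integrableOn_Ioc_of_le zero_le_one).1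
        (intervalIntegrable_rpow' h2)).const_mul β)
    apply hInt.congr
    rw [hμ]
    exact (ae_restrict_iff' measurableSet_Ioc).2 (ae_of_all _ fun t ht => (hnorm t ht).symm)
  have hsecae : ∀ᵐ t ∂μ, Integrable (fun s => Function.uncurry G (s, t)) μ := by
    rw [hμ]
    apply (ae_restrict_iff' measurableSet_Ioc).2
    apply ae_of_all
    intro t ht
    have h := (hpc1 t ht).union (hpc2 t)
    rw [Ioc_union_Ioc_eq_Ioc ht.1.le ht.2] at h
    exact h
  have hGint : Integrable (Function.uncurry G) (μ.prod μ) :=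
    (integrable_prod_iff' hGm.aestronglyMeasurable).2 ⟨hsecae, hnormint⟩
  constructor
  · rw [intervalIntegrable_iff_integrableOn_Ioc_of_le zero_le_one]
    have h1 := hGint.integral_prod_left
    apply h1.congr
    rw [hμ]
    apply (ae_restrict_iff' measurableSet_Ioc).2
    apply ae_of_all
    intro s hs
    exact inner1 s hs
  · rw [intervalIntegral.integral_of_le zero_le_one, intervalIntegral.integral_of_le zero_le_one]
    calc ∫ s in Ioc (0:ℝ) 1, ∫ t in s..1, s ^ p * t ^ p * (t - s) ^ q
        = ∫ s in Ioc (0:ℝ) 1, ∫ t in Ioc (0:ℝ) 1, G s t :=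
          setIntegral_congr_fun measurableSet_Ioc (fun s hs => (inner1 s hs).symm)
      _ = ∫ t in Ioc (0:ℝ) 1, ∫ s in Ioc (0:ℝ) 1, G s t := integral_integral_swap hGint
      _ = ∫ t in Ioc (0:ℝ) 1, ∫ s in (0:ℝ)..t, s ^ p * t ^ p * (t - s) ^ q :=
          setIntegral_congr_fun measurableSet_Ioc (fun t ht => inner2 t ht)

lemma aux_val {p q : ℝ} (hp : -1 < p) (hq : -1 < q) {t : ℝ} (ht : 0 < t) :
    ∫ s in (0:ℝ)..t, s ^ p * t ^ p * (t - s) ^ q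
      = (∫ u in (0:ℝ)..1, u ^ p * (1 - u) ^ q) * t ^ (2 * p + q + 1) := by
  have e : ∫ s in (0:ℝ)..t, s ^ p * t ^ p * (t - s) ^ q
      = t ^ p * ∫ s in (0:ℝ)..t, s ^ p * (t - s) ^ q := by
    rw [← intervalIntegral.integral_const_mul]
    apply intervalIntegral.integral_congr
    intro s _
    ring
  rw [e, aux_scale ht, ← mul_assoc, ← Real.rpow_add ht,
    show p + (p + q + 1) = 2 * p + q + 1 by ring]
  ring

/-- For `H ∈ (1/2,1)`,
`H(2H−1) ∫_0^1 ∫_0^1 (1−t)^{−1/2}(1−s)^{−1/2}|t−s|^{2H−2} dt ds = 2H · B(2H−1, 1/2)`,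
with the Beta function `B(x,y) = ∫_0^1 u^{x−1}(1−u)^{y−1} du`. -/
theorem fbm_wiener_integral_variance (H : ℝ) (hH : 1 / 2 < H) (hH1 : H < 1) :
    H * (2 * H - 1) *
      ∫ s in (0 : ℝ)..1, ∫ t in (0 : ℝ)..1,
        (1 - t) ^ (-(1 / 2 : ℝ)) * (1 - s) ^ (-(1 / 2 : ℝ)) * |t - s| ^ (2 * H - 2)
    = 2 * H * ∫ u in (0 : ℝ)..1, u ^ (2 * H - 1 - 1) * (1 - u) ^ ((1 / 2 : ℝ) - 1) := by
  set a : ℝ := -(1 / 2 : ℝ) with ha_def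
  set c : ℝ := 2 * H - 2 with hc_def
  have ha : -1 < a := by rw [ha_def]; norm_num
  have ha0 : a < 0 := by rw [ha_def]; norm_num
  have hc : -1 < c := by rw [hc_def]; linarith
  have hc0 : c < 0 := by rw [hc_def]; linarith
  have h2 : -1 < 2 * a + c + 1 := by rw [ha_def, hc_def]; linarith
  set β : ℝ := ∫ u in (0:ℝ)..1, u ^ a * (1 - u) ^ c with hβ
  -- Step 1 : flip both variables
  have flip : (∫ s in (0:ℝ)..1, ∫ t in (0:ℝ)..1, (1 - t) ^ a * (1 - s) ^ a * |t - s| ^ c)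
      = ∫ s in (0:ℝ)..1, ∫ t in (0:ℝ)..1, s ^ a * t ^ a * |t - s| ^ c := by
    have e1 : ∀ s : ℝ, (∫ t in (0:ℝ)..1, (1 - t) ^ a * (1 - s) ^ a * |t - s| ^ c)
        = ∫ t in (0:ℝ)..1, t ^ a * (1 - s) ^ a * |1 - t - s| ^ c := by
      intro s
      have h := intervalIntegral.integral_comp_sub_left (a := (0:ℝ)) (b := 1)
        (fun x => x ^ a * (1 - s) ^ a * |1 - x - s| ^ c) 1
      simp only [sub_zero, sub_self] at h
      rw [← h]
      apply intervalIntegral.integral_congr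
      intro t _
      simp only
      rw [show (1:ℝ) - (1 - t) - s = t - s by ring]
    calc (∫ s in (0:ℝ)..1, ∫ t in (0:ℝ)..1, (1 - t) ^ a * (1 - s) ^ a * |t - s| ^ c)
        = ∫ s in (0:ℝ)..1,
            (fun y => ∫ t in (0:ℝ)..1, t ^ a * y ^ a * |y - t| ^ c) (1 - s) := by
          apply intervalIntegral.integral_congr
          intro s _
          dsimp only
          rw [e1 s]
          apply intervalIntegral.integral_congr
          intro t _
          simp only
          rw [show (1:ℝ) - t - s = (1 - s) - t by ring]
      _ = ∫ y in (0:ℝ)..1, ∫ t in (0:ℝ)..1, t ^ a * y ^ a * |y - t| ^ c := by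
          have h := intervalIntegral.integral_comp_sub_left (a := (0:ℝ)) (b := 1)
            (fun y => ∫ t in (0:ℝ)..1, t ^ a * y ^ a * |y - t| ^ c) 1
          simp only [sub_zero, sub_self] at h
          exact h
      _ = ∫ s in (0:ℝ)..1, ∫ t in (0:ℝ)..1, s ^ a * t ^ a * |t - s| ^ c := by
          apply intervalIntegral.integral_congr
          intro s _
          apply intervalIntegral.integral_congr
          intro t _
          simp only
          rw [abs_sub_comm]
          ring
  -- Step 2 : split the inner integral
  have hsplit : ∀ s ∈ Ioc (0:ℝ) 1,
      (∫ t in (0:ℝ)..1, s ^ a * t ^ a * |t - s| ^ c)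
        = s ^ a * (s ^ (a + c + 1) * β)
          + ∫ t in s..1, s ^ a * t ^ a * (t - s) ^ c := by
    intro s hs
    have i1 : IntervalIntegrable (fun t => s ^ a * t ^ a * |t - s| ^ c) volume 0 s := by
      rw [intervalIntegrable_iff_integrableOn_Ioc_of_le hs.1.le]
      have h0 : IntegrableOn (fun t => s ^ a * (t ^ a * (s - t) ^ c)) (Ioc 0 s) volume :=
        (intervalIntegrable_iff_integrableOn_Ioc_of_le hs.1.le).1
          ((aux1 ha hc hs.1).const_mul _)
      apply h0.congr_fun _ measurableSet_Ioc
      intro t ht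
      dsimp only
      rw [abs_sub_comm, abs_of_nonneg (sub_nonneg.2 ht.2)]
      ring
    have i2 : IntervalIntegrable (fun t => s ^ a * t ^ a * |t - s| ^ c) volume s 1 := by
      rw [intervalIntegrable_iff_integrableOn_Ioc_of_le hs.2]
      have h0 : IntegrableOn (fun t => s ^ a * (t ^ a * (t - s) ^ c)) (Ioc s 1) volume :=
        (intervalIntegrable_iff_integrableOn_Ioc_of_le hs.2).1
          ((aux2 hc hs.1 hs.2).const_mul _)
      apply h0.congr_fun _ measurableSet_Ioc
      intro t ht
      dsimp only
      rw [abs_of_nonneg (sub_nonneg.2 ht.1.le)]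
      ring
    rw [← intervalIntegral.integral_add_adjacent_intervals i1 i2]
    congr 1
    · have e : ∫ t in (0:ℝ)..s, s ^ a * t ^ a * |t - s| ^ c
          = s ^ a * ∫ t in (0:ℝ)..s, t ^ a * (s - t) ^ c := by
        rw [← intervalIntegral.integral_const_mul]
        apply intervalIntegral.integral_congr
        intro t ht
        rw [uIcc_of_le hs.1.le] at ht
        simp only
        rw [abs_sub_comm, abs_of_nonneg (sub_nonneg.2 ht.2)]
        ring
      rw [e, aux_scale hs.1, ← hβ]
    · apply intervalIntegral.integral_congr
      intro t ht
      rw [uIcc_of_le hs.2] at ht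
      simp only
      rw [abs_of_nonneg (sub_nonneg.2 ht.1)]
  -- pointwise a.e. rewrite of the outer integral
  have hae : (∫ s in (0:ℝ)..1, ∫ t in (0:ℝ)..1, s ^ a * t ^ a * |t - s| ^ c)
      = ∫ s in (0:ℝ)..1,
          (s ^ a * (s ^ (a + c + 1) * β) + ∫ t in s..1, s ^ a * t ^ a * (t - s) ^ c) := by
    apply intervalIntegral.integral_congr_ae
    apply ae_of_all
    intro s hs
    rw [Set.uIoc_of_le zero_le_one] at hs
    exact hsplit s hs
  -- integrability of the two outer summands
  have iA : IntervalIntegrable (fun s : ℝ => s ^ a * (s ^ (a + c + 1) * β)) volume 0 1 := by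
    rw [intervalIntegrable_iff_integrableOn_Ioc_of_le zero_le_one]
    have h0 : IntegrableOn (fun s : ℝ => β * s ^ (2 * a + c + 1)) (Ioc 0 1) volume :=
      ((intervalIntegrable_iff_integrableOn_Ioc_of_le zero_le_one).1
        (intervalIntegrable_rpow' h2)).const_mul β
    apply h0.congr_fun _ measurableSet_Ioc
    intro s hs
    dsimp only
    rw [show 2 * a + c + 1 = a + (a + c + 1) by ring, Real.rpow_add hs.1 a (a + c + 1)]
    ring
  have iB := (key ha hc hc0 h2).1
  have hne : (2 : ℝ) * H - 1 ≠ 0 := by intro h; rw [div_lt_iff₀ (by norm_num : (0:ℝ) < 2)] at hH; linarith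
  have hAval : ∫ s in (0:ℝ)..1, s ^ a * (s ^ (a + c + 1) * β) = β / (2 * H - 1) := by
    have e : ∫ s in (0:ℝ)..1, s ^ a * (s ^ (a + c + 1) * β)
        = ∫ s in (0:ℝ)..1, β * s ^ (2 * a + c + 1) := by
      apply intervalIntegral.integral_congr_ae
      apply ae_of_all
      intro s hs
      rw [Set.uIoc_of_le zero_le_one] at hs
      rw [show 2 * a + c + 1 = a + (a + c + 1) by ring, Real.rpow_add hs.1 a (a + c + 1)]
      ring
    rw [e, intervalIntegral.integral_const_mul, integral_rpow (Or.inl h2),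
      Real.one_rpow, Real.zero_rpow (by rw [ha_def, hc_def]; intro h; apply hne; linarith),
      show 2 * a + c + 1 + 1 = 2 * H - 1 by rw [ha_def, hc_def]; ring]
    field_simp
    ring
  have hBval : ∫ s in (0:ℝ)..1, ∫ t in s..1, s ^ a * t ^ a * (t - s) ^ c
      = β / (2 * H - 1) := by
    rw [(key ha hc hc0 h2).2]
    have e : ∫ t in (0:ℝ)..1, ∫ s in (0:ℝ)..t, s ^ a * t ^ a * (t - s) ^ c
        = ∫ t in (0:ℝ)..1, β * t ^ (2 * a + c + 1) := by
      apply intervalIntegral.integral_congr_ae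
      apply ae_of_all
      intro t ht
      rw [Set.uIoc_of_le zero_le_one] at ht
      rw [aux_val ha hc ht.1, ← hβ]
    rw [e, intervalIntegral.integral_const_mul, integral_rpow (Or.inl h2),
      Real.one_rpow, Real.zero_rpow (by rw [ha_def, hc_def]; intro h; apply hne; linarith),
      show 2 * a + c + 1 + 1 = 2 * H - 1 by rw [ha_def, hc_def]; ring]
    field_simp
    ring
  have hRHS : ∫ u in (0:ℝ)..1, u ^ (2 * H - 1 - 1) * (1 - u) ^ ((1 / 2 : ℝ) - 1) = β := by
    rw [show (2 * H - 1 - 1 : ℝ) = c by rw [hc_def]; ring,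
      show ((1 / 2 : ℝ) - 1) = a by rw [ha_def]; norm_num, hβ]
    exact beta_symm
  rw [flip, hae, intervalIntegral.integral_add iA iB, hAval, hBval, hRHS]
  have e : β / (2 * H - 1) * (2 * H - 1) = β := div_mul_cancel₀ β hne
  linear_combination (2 * H) * e
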